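/- The set of potentially stable points is open and backward-invariant, and for any stationary probability measure ρ, ρ-almost every potentially stable point is almost surely stable. -/

import Mathlib

open MeasureTheory ProbabilityTheory Filter Topology
open scoped ENNReal

/-- A (discrete-time) filtered random dynamical system over a memoryless stationary
noise space, on a metric space `X`. -/
structure MRDS (Ω X : Type*) [mΩ : MeasurableSpace Ω] [MetricSpace X]
    [mX : MeasurableSpace X] [BorelSpace X] where
  P : Measure Ω
  hprob : IsProbabilityMeasure P
  F : ℕ → MeasurableSpace Ω
  hle : ∀ t, F t ≤ mΩ
  hmono : Monotone F
  θ : ℕ → Ω → Ω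
  hθ0 : θ 0 = id
  hθadd : ∀ s t, θ (s + t) = θ s ∘ θ t
  hθmeas : ∀ s t, @Measurable Ω Ω (F (s + t)) (F s) (θ t)
  hθpres : ∀ t, MeasurePreserving (θ t) P P
  memless : ∀ s, Indep (F s) ((⨆ t, F t).comap (θ s)) P
  φ : ℕ → Ω → X → X
  hφcont : ∀ t ω, Continuous (φ t ω)
  hφmeas : ∀ t, @Measurable (Ω × X) X ((F t).prod mX) mX (fun p => φ t p.1 p.2)
  hφ0 : ∀ ω, φ 0 ω = id
  hφcocycle : ∀ s t ω, φ (s + t) ω = φ t (θ s ω) ∘ φ s ω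

namespace MRDS

variable {Ω X : Type*} [MeasurableSpace Ω] [MetricSpace X]
  [MeasurableSpace X] [BorelSpace X]

/-- The one-point transition probabilities `φ_x^t`. -/
noncomputable def law (R : MRDS Ω X) (x : X) (t : ℕ) : Measure X :=
  R.P.map (fun ω => R.φ t ω x)

/-- A closed set that is forward-invariant for the one-point transition probabilities. -/
def FwdInv (R : MRDS Ω X) (K : Set X) : Prop :=
  IsClosed K ∧ ∀ x ∈ K, ∀ t, R.law x t K = 1

/-- A minimal set: non-empty, closed, forward-invariant, with no proper non-empty closed
forward-invariant subsets. -/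
def Minimal (R : MRDS Ω X) (K : Set X) : Prop :=
  K.Nonempty ∧ R.FwdInv K ∧ ∀ K' ⊆ K, R.FwdInv K' → K' = K ∨ K' = ∅

/-- `A` contracts under the noise realisation `ω`. -/
def contracts (R : MRDS Ω X) (ω : Ω) (A : Set X) : Prop :=
  Tendsto (fun t => EMetric.diam (R.φ t ω '' A)) atTop (𝓝 0)

/-- `(ω, x)` is an asymptotically stable pair. -/
def stablePair (R : MRDS Ω X) (ω : Ω) (x : X) : Prop :=
  ∃ U ∈ 𝓝 x, R.contracts ω U

/-- The set of asymptotically stable pairs. -/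
def O (R : MRDS Ω X) : Set (Ω × X) := {p | R.stablePair p.1 p.2}

/-- The set of noise realisations under which `U` contracts. -/
def EU (R : MRDS Ω X) (U : Set X) : Set Ω := {ω | R.contracts ω U}

/-- `x` is potentially stable. -/
def potStable (R : MRDS Ω X) (x : X) : Prop := 0 < R.P {ω | R.stablePair ω x}

/-- `x` is almost surely stable. -/
def asStable (R : MRDS Ω X) (x : X) : Prop := R.P {ω | R.stablePair ω x} = 1

/-- `φ` is globally synchronising. -/
def synchronising (R : MRDS Ω X) : Prop :=
  ∀ x y : X,
    R.P {ω | Tendsto (fun t => dist (R.φ t ω x) (R.φ t ω y)) atTop (𝓝 0)} = 1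

/-- `φ` is stably synchronising. -/
def stablySynchronising (R : MRDS Ω X) : Prop :=
  R.synchronising ∧ ∀ x : X, R.asStable x

/-- `ρ` is a stationary measure for the one-point transition probabilities. -/
def stationary (R : MRDS Ω X) (ρ : Measure X) : Prop :=
  ∀ t, ∀ A : Set X, MeasurableSet A → ∫⁻ x, R.law x t A ∂ρ = ρ A

end MRDS

namespace MRDS

variable {Ω X : Type*} [mΩi : MeasurableSpace Ω] [MetricSpace X]
  [mXi : MeasurableSpace X] [BorelSpace X]


section Helpers

variable {Ω' Y : Type*}

lemma measurable_edist' (m : MeasurableSpace Ω') [PseudoEMetricSpace Y]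
    [MeasurableSpace Y] [OpensMeasurableSpace Y] [SecondCountableTopology Y]
    {f g : Ω' → Y} (hf : Measurable[m] f) (hg : Measurable[m] g) :
    Measurable[m] fun ω => edist (f ω) (g ω) := by
  letI := m; exact hf.edist hg

lemma measurable_iSup' (m : MeasurableSpace Ω') {ι : Type*} [Countable ι]
    (f : ι → Ω' → ℝ≥0∞) (hf : ∀ i, Measurable[m] (f i)) :
    Measurable[m] fun ω => ⨆ i, f i ω := by
  letI := m; exact Measurable.iSup hf

lemma measurableSet_le'' (m : MeasurableSpace Ω') (f : Ω' → ℝ≥0∞) (c : ℝ≥0∞)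
    (hf : Measurable[m] f) : MeasurableSet[m] {ω | f ω ≤ c} := by
  letI := m; exact measurableSet_le hf measurable_const

end Helpers

/-- the big sigma algebra -/
def MM (R : MRDS Ω X) : MeasurableSpace Ω := ⨆ t, R.F t

lemma hMM (R : MRDS Ω X) : MM R ≤ mΩi := iSup_le R.hle

lemma measurable_phi_pt (R : MRDS Ω X) (t : ℕ) (x : X) :
    Measurable[R.F t] fun ω => R.φ t ω x := by
  have h : @Measurable Ω (Ω × X) (R.F t) ((R.F t).prod mXi) (fun ω => (ω, x)) :=
    Measurable.prodMk measurable_id measurable_const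
  exact (R.hφmeas t).comp h

lemma contracts_mono (R : MRDS Ω X) {ω : Ω} {A A' : Set X} (h : A ⊆ A')
    (hc : R.contracts ω A') : R.contracts ω A :=
  tendsto_of_tendsto_of_tendsto_of_le_of_le tendsto_const_nhds hc
    (fun _ => zero_le) (fun t => EMetric.diam_mono (Set.image_mono h))

variable [Nonempty X] [SecondCountableTopology X]

/-- countable collection of basic balls -/
def B (_ : MRDS Ω X) (k : ℕ × ℚ) : Set X :=
  Metric.ball (TopologicalSpace.denseSeq X k.1) (k.2 : ℝ)

/-- event that basic ball `k` contracts -/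
def E (R : MRDS Ω X) (k : ℕ × ℚ) : Set Ω := {ω | R.contracts ω (B R k)}

lemma stablePair_iff (R : MRDS Ω X) (ω : Ω) (x : X) :
    R.stablePair ω x ↔ ∃ k, x ∈ B R k ∧ ω ∈ E R k := by
  constructor
  · rintro ⟨U, hU, hc⟩
    obtain ⟨ε, hε, hball⟩ := Metric.mem_nhds_iff.1 hU
    obtain ⟨q, hq0, hqε⟩ := exists_rat_btwn (by linarith : (0:ℝ) < ε / 2)
    have hq0' : (0:ℝ) < (q:ℝ) := by exact_mod_cast hq0
    obtain ⟨i, hi⟩ := (TopologicalSpace.denseRange_denseSeq X).exists_dist_lt x hq0'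
    refine ⟨(i, q), ?_, ?_⟩
    · simpa [B, Metric.mem_ball, dist_comm] using hi
    · refine R.contracts_mono (fun z hz => hball ?_) hc
      have h1 : dist z (TopologicalSpace.denseSeq X i) < (q:ℝ) := hz
      have h2 : dist (TopologicalSpace.denseSeq X i) x < (q:ℝ) := by
        rwa [dist_comm]
      have : dist z x < ε := by
        calc dist z x ≤ dist z (TopologicalSpace.denseSeq X i)
            + dist (TopologicalSpace.denseSeq X i) x := dist_triangle _ _ _
          _ < q + q := by linarith
          _ < ε := by linarith
      exact this
  · rintro ⟨k, hx, hE⟩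
    exact ⟨B R k, Metric.isOpen_ball.mem_nhds hx, hE⟩

lemma measurable_diam (R : MRDS Ω X) (t : ℕ) {U : Set X} (hU : IsOpen U) :
    Measurable[R.F t] fun ω => EMetric.diam (R.φ t ω '' U) := by
  classical
  set D : Set X := Set.range (TopologicalSpace.denseSeq X) with hD
  have hDd : Dense D := (TopologicalSpace.denseRange_denseSeq X)
  set T : Set X := U ∩ D with hT
  have hTc : T.Countable := (Set.countable_range _).mono Set.inter_subset_right
  have hsub : T ⊆ U := Set.inter_subset_left
  have hdense : U ⊆ closure T := hDd.open_subset_closure_inter hU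
  have key : ∀ ω, EMetric.diam (R.φ t ω '' U)
      = ⨆ (u : T) (v : T), edist (R.φ t ω u) (R.φ t ω v) := by
    intro ω
    apply le_antisymm
    · have h1 : R.φ t ω '' U ⊆ closure (R.φ t ω '' T) := by
        intro z hz
        obtain ⟨u, hu, rfl⟩ := hz
        exact (image_closure_subset_closure_image (R.hφcont t ω))
          (Set.mem_image_of_mem _ (hdense hu))
      calc EMetric.diam (R.φ t ω '' U) ≤ EMetric.diam (closure (R.φ t ω '' T)) :=
            EMetric.diam_mono h1
        _ = EMetric.diam (R.φ t ω '' T) := EMetric.diam_closure _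
        _ ≤ ⨆ (u : T) (v : T), edist (R.φ t ω u) (R.φ t ω v) := by
            apply EMetric.diam_le
            rintro a ⟨u, hu, rfl⟩ b ⟨v, hv, rfl⟩
            exact le_iSup_of_le ⟨u, hu⟩ (le_iSup_of_le ⟨v, hv⟩ le_rfl)
    · refine iSup_le fun u => iSup_le fun v => ?_
      exact EMetric.edist_le_diam_of_mem
        (Set.mem_image_of_mem _ (hsub u.2)) (Set.mem_image_of_mem _ (hsub v.2))
  simp only [key]
  haveI : Countable T := hTc.to_subtype
  exact measurable_iSup' (R.F t) (fun (u : T) ω => ⨆ (v : T), edist (R.φ t ω ↑u) (R.φ t ω ↑v))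
    (fun u => measurable_iSup' (R.F t) (fun (v : T) ω => edist (R.φ t ω ↑u) (R.φ t ω ↑v))
      (fun v => measurable_edist' (R.F t) (R.measurable_phi_pt t ↑u) (R.measurable_phi_pt t ↑v)))

lemma measurableSet_E (R : MRDS Ω X) (k : ℕ × ℚ) : MeasurableSet[MM R] (E R k) := by
  have hset : E R k = ⋂ (n : ℕ), ⋃ (N : ℕ), ⋂ (m : ℕ), ⋂ (_ : N ≤ m),
      {ω | EMetric.diam (R.φ m ω '' B R k) ≤ ((n : ℝ≥0∞) + 1)⁻¹} := by
    ext ω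
    simp only [E, Set.mem_setOf_eq, MRDS.contracts, ENNReal.tendsto_atTop_zero,
      Set.mem_iInter, Set.mem_iUnion, Set.mem_setOf_eq]
    constructor
    · intro h n
      exact h _ (by simp)
    · intro h ε hε
      obtain ⟨n, hn⟩ := ENNReal.exists_inv_nat_lt hε.ne'
      obtain ⟨N, hN⟩ := h n
      refine ⟨N, fun m hm => le_trans (hN m hm) ?_⟩
      refine le_trans (ENNReal.inv_le_inv.2 ?_) hn.le
      exact le_add_right le_rfl
    
  rw [hset]
  refine MeasurableSet.iInter fun n => MeasurableSet.iUnion fun N =>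
    MeasurableSet.iInter fun m => MeasurableSet.iInter fun _ => ?_
  have h : Measurable[MM R] fun ω => EMetric.diam (R.φ m ω '' B R k) :=
    (R.measurable_diam m (Metric.isOpen_ball : IsOpen (B R k))).mono
      (le_iSup R.F m) le_rfl
  exact measurableSet_le'' (MM R) _ _ h

section MoreHelpers

variable {A B' C : Type*}

lemma measurableSet_prod' (m1 : MeasurableSpace A) (m2 : MeasurableSpace B')
    {s : Set A} {t : Set B'} (hs : MeasurableSet[m1] s) (ht : MeasurableSet[m2] t) :
    MeasurableSet[m1.prod m2] (s ×ˢ t) := by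
  letI := m1; letI := m2; exact hs.prod ht

lemma measurable_pair' (m : MeasurableSpace A) (m1 : MeasurableSpace B')
    (m2 : MeasurableSpace C) {f : A → B'} {g : A → C}
    (hf : @Measurable A B' m m1 f) (hg : @Measurable A C m m2 g) :
    @Measurable A (B' × C) m (m1.prod m2) fun a => (f a, g a) := by
  letI := m; letI := m1; letI := m2; exact hf.prodMk hg

lemma measurable_fst' (m1 : MeasurableSpace A) (m2 : MeasurableSpace B') :
    @Measurable (A × B') A (m1.prod m2) m1 Prod.fst := by
  letI := m1; letI := m2; exact measurable_fst

lemma measurable_snd' (m1 : MeasurableSpace A) (m2 : MeasurableSpace B') :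
    @Measurable (A × B') B' (m1.prod m2) m2 Prod.snd := by
  letI := m1; letI := m2; exact measurable_snd

lemma map_apply' (m1 : MeasurableSpace A) (m2 : MeasurableSpace B')
    (μ : @Measure A m1) {f : A → B'} (hf : @Measurable A B' m1 m2 f)
    {s : Set B'} (hs : MeasurableSet[m2] s) :
    @Measure.map A B' m1 m2 f μ s = μ (f ⁻¹' s) := by
  letI := m1; letI := m2; exact Measure.map_apply hf hs

lemma isProb_map' (m1 : MeasurableSpace A) (m2 : MeasurableSpace B')
    (μ : @Measure A m1) (hp : @IsProbabilityMeasure A m1 μ) {f : A → B'}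
    (hf : @Measurable A B' m1 m2 f) :
    @IsProbabilityMeasure B' m2 (@Measure.map A B' m1 m2 f μ) := by
  letI := m1; letI := m2; haveI := hp; exact Measure.isProbabilityMeasure_map hf.aemeasurable

lemma sfinite_of_prob' (m : MeasurableSpace A) (μ : @Measure A m)
    (h : @IsProbabilityMeasure A m μ) : @SFinite A m μ := by
  letI := m; haveI := h; infer_instance

lemma measurable_measure_sec' (m1 : MeasurableSpace A) (m2 : MeasurableSpace B')
    (μ : @Measure A m1) (hfin : @SFinite A m1 μ) {s : Set (A × B')}
    (hs : MeasurableSet[m1.prod m2] s) :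
    @Measurable B' ℝ≥0∞ m2 _ (fun y => μ ((fun x => (x, y)) ⁻¹' s)) := by
  letI := m1; letI := m2; haveI := hfin
  exact measurable_measure_prodMk_right hs

lemma prod_apply' (m1 : MeasurableSpace A) (m2 : MeasurableSpace B')
    (μ : @Measure A m1) (ν : @Measure B' m2) (hν : @SFinite B' m2 ν) {s : Set (A × B')}
    (hs : MeasurableSet[m1.prod m2] s) :
    @Measure.prod A B' m1 m2 μ ν s = @lintegral A m1 μ (fun a => ν (Prod.mk a ⁻¹' s)) := by
  letI := m1; letI := m2; haveI := hν; exact Measure.prod_apply hs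

lemma map_id_eq_trim (m m0 : MeasurableSpace A) (hle : m ≤ m0) (μ : @Measure A m0) :
    @Measure.map A A m0 m id μ = μ.trim hle := by
  letI := m
  refine Measure.ext fun s hs => ?_
  rw [map_apply' m0 m μ (measurable_id'' hle) hs, trim_measurableSet_eq hle hs]
  rfl

lemma lintegral_map_le' (m m0 : MeasurableSpace A) (μ : @Measure A m0)
    (hle : m ≤ m0) {h : A → ℝ≥0∞} (hh : Measurable[m] h) :
    @lintegral A m (@Measure.map A A m0 m id μ) h = ∫⁻ a, h a ∂μ := by
  rw [map_id_eq_trim m m0 hle μ]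
  exact lintegral_trim hle hh

lemma aemeasurable' (m0 : MeasurableSpace A) (m : MeasurableSpace B')
    (μ : @Measure A m0) {f : A → B'} (hf : @Measurable A B' m0 m f) :
    ∃ g : A → B', @Measurable A B' m0 m g ∧ f =ᵐ[μ] g :=
  ⟨f, hf, Filter.EventuallyEq.rfl⟩

end MoreHelpers

/-- helper probability `g` -/
noncomputable def g (R : MRDS Ω X) : X → ℝ≥0∞ := fun x => R.P {ω | R.stablePair ω x}

lemma g_le_one (R : MRDS Ω X) (x : X) : R.g x ≤ 1 := by
  haveI := R.hprob; exact prob_le_one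

/-- the set of stable pairs, recast -/
def S (R : MRDS Ω X) : Set (Ω × X) := ⋃ k, (E R k) ×ˢ (B R k)

lemma measurableSet_S (R : MRDS Ω X) : MeasurableSet[(MM R).prod mXi] (S R) :=
  MeasurableSet.iUnion fun k => measurableSet_prod' (MM R) mXi
    (R.measurableSet_E k) Metric.isOpen_ball.measurableSet

lemma mem_S_iff (R : MRDS Ω X) (ω : Ω) (x : X) : (ω, x) ∈ S R ↔ R.stablePair ω x := by
  simp only [S, Set.mem_iUnion, Set.mem_prod, R.stablePair_iff]
  exact ⟨fun ⟨k, h1, h2⟩ => ⟨k, h2, h1⟩, fun ⟨k, h1, h2⟩ => ⟨k, h2, h1⟩⟩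

lemma stable_set_eq (R : MRDS Ω X) (x : X) :
    {ω | R.stablePair ω x} = ⋃ (k) (_ : x ∈ B R k), E R k := by
  ext ω; simp only [Set.mem_setOf_eq, Set.mem_iUnion, R.stablePair_iff]
  exact ⟨fun ⟨k, h1, h2⟩ => ⟨k, h1, h2⟩, fun ⟨k, h1, h2⟩ => ⟨k, h1, h2⟩⟩

lemma measurableSet_sec (R : MRDS Ω X) (x : X) :
    MeasurableSet[MM R] {ω | R.stablePair ω x} := by
  rw [R.stable_set_eq x]
  exact MeasurableSet.iUnion fun k => MeasurableSet.iUnion fun _ => R.measurableSet_E k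

/-- `P` as a measure on the sub-σ-algebra `MM` -/
noncomputable def ν (R : MRDS Ω X) : @Measure Ω (MM R) :=
  @Measure.map Ω Ω mΩi (MM R) id R.P

lemma ν_apply (R : MRDS Ω X) {s : Set Ω} (hs : MeasurableSet[MM R] s) : ν R s = R.P s := by
  simp only [ν]
  rw [map_apply' mΩi (MM R) R.P (measurable_id'' (hMM R)) hs]
  rfl

lemma ν_prob (R : MRDS Ω X) : @IsProbabilityMeasure Ω (MM R) (ν R) :=
  isProb_map' mΩi (MM R) R.P R.hprob (measurable_id'' (hMM R))

lemma measurable_g (R : MRDS Ω X) : Measurable (g R) := by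
  have h := measurable_measure_sec' (MM R) mXi (ν R)
    (sfinite_of_prob' (MM R) (ν R) (ν_prob R)) (measurableSet_S R)
  have heq : ∀ x, R.g x = ν R ((fun ω => (ω, x)) ⁻¹' S R) := by
    intro x
    have hsec : ((fun ω => (ω, x)) ⁻¹' S R) = {ω | R.stablePair ω x} := by
      ext ω; exact R.mem_S_iff ω x
    rw [hsec, ν_apply R (R.measurableSet_sec x)]
    rfl
  simpa only [funext heq] using h

lemma stablePair_shift (R : MRDS Ω X) {t : ℕ} {ω : Ω} {x : X}
    (h : R.stablePair (R.θ t ω) (R.φ t ω x)) : R.stablePair ω x := by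
  obtain ⟨V, hV, hc⟩ := h
  refine ⟨R.φ t ω ⁻¹' interior V, ?_, ?_⟩
  · exact (R.hφcont t ω).continuousAt.preimage_mem_nhds (interior_mem_nhds.2 hV)
  · have key : ∀ r, t ≤ r → EMetric.diam (R.φ r ω '' (R.φ t ω ⁻¹' interior V))
        ≤ EMetric.diam (R.φ (r - t) (R.θ t ω) '' V) := by
      intro r hr
      have hco : R.φ r ω = R.φ (r - t) (R.θ t ω) ∘ R.φ t ω := by
        have h' := R.hφcocycle t (r - t) ω
        rwa [Nat.add_sub_cancel' hr] at h'
      rw [hco, Set.image_comp]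
      exact EMetric.diam_mono (Set.image_mono
        (subset_trans (Set.image_preimage_subset _ _) interior_subset))
    have h2 : Tendsto (fun r => EMetric.diam (R.φ (r - t) (R.θ t ω) '' V)) atTop (𝓝 0) :=
      hc.comp (tendsto_sub_atTop_nat t)
    exact tendsto_of_tendsto_of_tendsto_of_le_of_le' tendsto_const_nhds h2
      (Eventually.of_forall fun r => zero_le) (eventually_atTop.2 ⟨t, key⟩)

lemma potStable_iff (R : MRDS Ω X) (x : X) :
    R.potStable x ↔ ∃ k, x ∈ B R k ∧ 0 < R.P (E R k) := by
  have hset : {ω | R.stablePair ω x} = ⋃ (k) (_ : x ∈ B R k), E R k := by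
    ext ω; simp only [Set.mem_setOf_eq, Set.mem_iUnion, R.stablePair_iff]
    exact ⟨fun ⟨k, h1, h2⟩ => ⟨k, h1, h2⟩, fun ⟨k, h1, h2⟩ => ⟨k, h1, h2⟩⟩
  constructor
  · intro h
    by_contra hc
    push_neg at hc
    have hz : R.P {ω | R.stablePair ω x} = 0 := by
      rw [hset]
      refine measure_iUnion_null fun k => measure_iUnion_null fun hk => ?_
      simpa [pos_iff_ne_zero, not_not] using hc k hk
    have h' : (0:ℝ≥0∞) < R.P {ω | R.stablePair ω x} := h
    rw [hz] at h'
    exact lt_irrefl _ h'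
  · rintro ⟨k, hx, hk⟩
    have hsub : E R k ⊆ {ω | R.stablePair ω x} := fun ω hω =>
      ⟨B R k, Metric.isOpen_ball.mem_nhds hx, hω⟩
    exact lt_of_lt_of_le hk (measure_mono hsub)

lemma potStable_set_eq (R : MRDS Ω X) :
    {x : X | R.potStable x} = ⋃ (k) (_ : 0 < R.P (E R k)), B R k := by
  ext x; simp only [Set.mem_setOf_eq, Set.mem_iUnion, R.potStable_iff]
  exact ⟨fun ⟨k, h1, h2⟩ => ⟨k, h2, h1⟩, fun ⟨k, h1, h2⟩ => ⟨k, h2, h1⟩⟩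

lemma isOpen_potStable (R : MRDS Ω X) : IsOpen {x : X | R.potStable x} := by
  rw [R.potStable_set_eq]
  exact isOpen_iUnion fun k => isOpen_iUnion fun _ => Metric.isOpen_ball

lemma measurable_theta (R : MRDS Ω X) (t : ℕ) :
    @Measurable Ω Ω mΩi (MM R) (R.θ t) := by
  rw [measurable_iff_comap_le, MM, MeasurableSpace.comap_iSup]
  exact iSup_le fun s =>
    le_trans (measurable_iff_comap_le.mp (R.hθmeas s t)) (R.hle (s + t))

lemma law_potStable_eq_zero (R : MRDS Ω X) {y : X} (hy : ¬ R.potStable y) (t : ℕ) :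
    R.law y t {x | R.potStable x} = 0 := by
  haveI := R.hprob
  have hZ : Measurable fun ω => R.φ t ω y := (R.measurable_phi_pt t y).mono (R.hle t) le_rfl
  by_contra hne
  have hex : ∃ k, 0 < R.P (E R k) ∧ R.law y t (B R k) ≠ 0 := by
    by_contra hc; push_neg at hc
    apply hne
    rw [R.potStable_set_eq]
    exact measure_iUnion_null fun k => measure_iUnion_null fun hk => hc k hk
  obtain ⟨k, hEk, hBk⟩ := hex
  have hBmeas : MeasurableSet (B R k) := Metric.isOpen_ball.measurableSet
  have hZB : MeasurableSet[R.F t] ((fun ω => R.φ t ω y) ⁻¹' B R k) :=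
    R.measurable_phi_pt t y hBmeas
  have hθE : MeasurableSet[(MM R).comap (R.θ t)] (R.θ t ⁻¹' E R k) :=
    ⟨E R k, R.measurableSet_E k, rfl⟩
  have hindep := (Indep_iff _ _ _).mp (R.memless t) _ _ hZB hθE
  have h1 : R.P ((fun ω => R.φ t ω y) ⁻¹' B R k) = R.law y t (B R k) :=
    (Measure.map_apply hZ hBmeas).symm
  have h2 : R.P (R.θ t ⁻¹' E R k) = R.P (E R k) :=
    (R.hθpres t).measure_preimage (hMM R _ (R.measurableSet_E k)).nullMeasurableSet
  have hposP : 0 < R.P ((fun ω => R.φ t ω y) ⁻¹' B R k ∩ R.θ t ⁻¹' E R k) := by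
    rw [hindep, h1, h2]
    exact ENNReal.mul_pos hBk hEk.ne'
  have hsub : (fun ω => R.φ t ω y) ⁻¹' B R k ∩ R.θ t ⁻¹' E R k
      ⊆ {ω | R.stablePair ω y} := by
    rintro ω ⟨hω1, hω2⟩
    exact R.stablePair_shift ⟨B R k, Metric.isOpen_ball.mem_nhds hω1, hω2⟩
  exact hy (lt_of_lt_of_le hposP (measure_mono hsub))

lemma law_compl_potStable_eq_one (R : MRDS Ω X) {y : X} (hy : ¬ R.potStable y) (t : ℕ) :
    R.law y t {x | R.potStable x}ᶜ = 1 := by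
  haveI := R.hprob
  have hZ : Measurable fun ω => R.φ t ω y := (R.measurable_phi_pt t y).mono (R.hle t) le_rfl
  haveI : IsProbabilityMeasure (R.law y t) := Measure.isProbabilityMeasure_map hZ.aemeasurable
  rw [prob_compl_eq_one_iff R.isOpen_potStable.measurableSet]
  exact R.law_potStable_eq_zero hy t

lemma key_fubini (R : MRDS Ω X) (t : ℕ) (x : X) {Bs : Set Ω} (hBs : MeasurableSet[R.F t] Bs) :
    R.P (Bs ∩ {ω | R.stablePair (R.θ t ω) (R.φ t ω x)})
      = ∫⁻ ω in Bs, R.g (R.φ t ω x) ∂ R.P := by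
  haveI := R.hprob
  set W : Set (Ω × Ω) := (Prod.fst ⁻¹' Bs) ∩ ((fun p : Ω × Ω => (p.2, R.φ t p.1 x)) ⁻¹' S R)
    with hW
  have hq : @Measurable (Ω × Ω) (Ω × X) ((R.F t).prod (MM R)) ((MM R).prod mXi)
      (fun p => (p.2, R.φ t p.1 x)) :=
    measurable_pair' _ _ _ (measurable_snd' (R.F t) (MM R))
      ((R.measurable_phi_pt t x).comp (measurable_fst' (R.F t) (MM R)))
  have hWmeas : MeasurableSet[(R.F t).prod (MM R)] W :=
    ((measurable_fst' (R.F t) (MM R)) hBs).inter (hq (measurableSet_S R))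
  have hPsi : @Measurable Ω (Ω × Ω) mΩi ((R.F t).prod (MM R)) (fun ω => (id ω, R.θ t ω)) :=
    measurable_pair' mΩi (R.F t) (MM R) (measurable_id'' (R.hle t)) (R.measurable_theta t)
  have hIF : @IndepFun Ω Ω Ω mΩi (R.F t) (MM R) id (R.θ t) R.P := by
    show Indep ((R.F t).comap id) ((MM R).comap (R.θ t)) R.P
    rw [MeasurableSpace.comap_id]
    exact R.memless t
  have hmap := (indepFun_iff_map_prod_eq_prod_map_map
    (aemeasurable' mΩi (R.F t) R.P (measurable_id'' (R.hle t)))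
    (aemeasurable' mΩi (MM R) R.P (R.measurable_theta t))).1 hIF
  have hpre : (fun ω => (id ω, R.θ t ω)) ⁻¹' W
      = Bs ∩ {ω | R.stablePair (R.θ t ω) (R.φ t ω x)} := by
    ext ω
    simp only [hW, Set.mem_preimage, Set.mem_inter_iff, Set.mem_setOf_eq, id_eq]
    exact and_congr_right fun _ => R.mem_S_iff _ _
  have step1 : R.P (Bs ∩ {ω | R.stablePair (R.θ t ω) (R.φ t ω x)})
      = @Measure.map Ω (Ω × Ω) mΩi ((R.F t).prod (MM R)) (fun ω => (id ω, R.θ t ω)) R.P W := by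
    rw [map_apply' mΩi ((R.F t).prod (MM R)) R.P hPsi hWmeas, hpre]
  have hν2prob : @IsProbabilityMeasure Ω (MM R) (@Measure.map Ω Ω mΩi (MM R) (R.θ t) R.P) :=
    isProb_map' _ _ _ R.hprob (R.measurable_theta t)
  have hsec : (fun ω₁ => (@Measure.map Ω Ω mΩi (MM R) (R.θ t) R.P) (Prod.mk ω₁ ⁻¹' W))
      = Bs.indicator (fun ω₁ => R.g (R.φ t ω₁ x)) := by
    funext ω₁
    by_cases h1 : ω₁ ∈ Bs
    · have hs : Prod.mk ω₁ ⁻¹' W = {ω₂ | R.stablePair ω₂ (R.φ t ω₁ x)} := by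
        ext ω₂
        simp only [hW, Set.mem_preimage, Set.mem_inter_iff, Set.mem_setOf_eq, h1, true_and]
        exact R.mem_S_iff _ _
      rw [hs, Set.indicator_of_mem h1]
      rw [map_apply' mΩi (MM R) R.P (R.measurable_theta t) (R.measurableSet_sec _)]
      have hpr := (R.hθpres t).measure_preimage
        (hMM R _ (R.measurableSet_sec (R.φ t ω₁ x))).nullMeasurableSet
      rw [hpr]; rfl
    · have hs : Prod.mk ω₁ ⁻¹' W = ∅ := by
        ext ω₂; simp [hW, h1]
      rw [hs, Set.indicator_of_notMem h1]
      simp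
  have hint_meas : Measurable[R.F t] (Bs.indicator (fun ω₁ => R.g (R.φ t ω₁ x))) :=
    ((measurable_g R).comp (R.measurable_phi_pt t x)).indicator hBs
  rw [step1, hmap, prod_apply' (R.F t) (MM R) _ _ (sfinite_of_prob' _ _ hν2prob) hWmeas, hsec,
    lintegral_map_le' (R.F t) mΩi R.P (R.hle t) hint_meas,
    lintegral_indicator (R.hle t _ hBs)]

lemma key_fubini_univ (R : MRDS Ω X) (t : ℕ) (x : X) :
    R.P {ω | R.stablePair (R.θ t ω) (R.φ t ω x)} = ∫⁻ ω, R.g (R.φ t ω x) ∂ R.P := by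
  have h := R.key_fubini t x (@MeasurableSet.univ Ω (R.F t))
  simpa using h

lemma prod_le_ambient (R : MRDS Ω X) (t : ℕ) : (R.F t).prod mXi ≤ mΩi.prod mXi := by
  show (R.F t).comap Prod.fst ⊔ mXi.comap Prod.snd ≤ mΩi.comap Prod.fst ⊔ mXi.comap Prod.snd
  exact sup_le_sup_right (MeasurableSpace.comap_mono (R.hle t)) _

lemma measurable_phi_joint (R : MRDS Ω X) (t : ℕ) :
    Measurable fun p : Ω × X => R.φ t p.1 p.2 :=
  (R.hφmeas t).mono (R.prod_le_ambient t) le_rfl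

lemma measurable_phi_x (R : MRDS Ω X) (t : ℕ) (x : X) :
    Measurable fun ω => R.φ t ω x :=
  (R.measurable_phi_pt t x).mono (R.hle t) le_rfl

lemma law_apply (R : MRDS Ω X) (t : ℕ) (x : X) {A : Set X} (hA : MeasurableSet A) :
    R.law x t A = R.P {ω | R.φ t ω x ∈ A} :=
  Measure.map_apply (R.measurable_phi_x t x) hA

lemma measurable_law (R : MRDS Ω X) (t : ℕ) : Measurable fun x => R.law x t := by
  haveI := R.hprob
  apply Measure.measurable_of_measurable_coe
  intro A hA
  have hjoint : MeasurableSet {p : Ω × X | R.φ t p.1 p.2 ∈ A} := (R.measurable_phi_joint t) hA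
  have h := measurable_measure_prodMk_right (μ := R.P) hjoint
  have heq : ∀ x, R.law x t A
      = R.P ((fun ω => (ω, x)) ⁻¹' {p : Ω × X | R.φ t p.1 p.2 ∈ A}) := fun x =>
    R.law_apply t x hA
  simpa only [funext heq] using h

/-- the transition kernel -/
noncomputable def κ (R : MRDS Ω X) (t : ℕ) : ProbabilityTheory.Kernel X X :=
  ⟨fun x => R.law x t, R.measurable_law t⟩

lemma markov_κ (R : MRDS Ω X) (t : ℕ) : ProbabilityTheory.IsMarkovKernel (κ R t) := by
  haveI := R.hprob
  exact ⟨fun x => Measure.isProbabilityMeasure_map (R.measurable_phi_x t x).aemeasurable⟩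

lemma measurable_lint_law (R : MRDS Ω X) (t : ℕ) {f : X → ℝ≥0∞} (hf : Measurable f) :
    Measurable fun x => ∫⁻ z, f z ∂(R.law x t) := by
  haveI := markov_κ R t
  exact Measurable.lintegral_kernel_prod_right' (κ := κ R t)
    (f := fun p : X × X => f p.2) (hf.comp measurable_snd)

lemma stationary_bind (R : MRDS Ω X) {ρ : Measure X} (hρ : R.stationary ρ) (t : ℕ) :
    ρ.bind (fun x => R.law x t) = ρ := by
  refine Measure.ext fun A hA => ?_
  rw [Measure.bind_apply hA (R.measurable_law t).aemeasurable]
  exact hρ t A hA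

lemma stationary_lintegral (R : MRDS Ω X) {ρ : Measure X} (hρ : R.stationary ρ) (t : ℕ)
    {f : X → ℝ≥0∞} (hf : Measurable f) :
    ∫⁻ x, (∫⁻ z, f z ∂(R.law x t)) ∂ρ = ∫⁻ z, f z ∂ρ := by
  conv_rhs => rw [← R.stationary_bind hρ t]
  rw [Measure.lintegral_bind (R.measurable_law t).aemeasurable hf.aemeasurable]

lemma measurableSet_At (R : MRDS Ω X) (t : ℕ) (x : X) :
    MeasurableSet {ω | R.stablePair (R.θ t ω) (R.φ t ω x)} := by
  have hmap : @Measurable Ω (Ω × X) mΩi ((MM R).prod mXi) (fun ω => (R.θ t ω, R.φ t ω x)) :=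
    measurable_pair' mΩi (MM R) mXi (R.measurable_theta t) (R.measurable_phi_x t x)
  have h := hmap (measurableSet_S R)
  have : (fun ω => (R.θ t ω, R.φ t ω x)) ⁻¹' S R
      = {ω | R.stablePair (R.θ t ω) (R.φ t ω x)} := by
    ext ω; exact R.mem_S_iff _ _
  rwa [this] at h

lemma ae_harmonic (R : MRDS Ω X) {ρ : Measure X} (hρp : IsProbabilityMeasure ρ)
    (hρ : R.stationary ρ) :
    ∀ᵐ x ∂ρ, ∀ t, R.P ({ω | R.stablePair ω x}
      \ {ω | R.stablePair (R.θ t ω) (R.φ t ω x)}) = 0 := by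
  haveI := R.hprob; haveI := hρp
  rw [ae_all_iff]
  intro t
  have hg := measurable_g R
  have h1 : ∀ x, ∫⁻ ω, R.g (R.φ t ω x) ∂ R.P = ∫⁻ z, R.g z ∂(R.law x t) := fun x =>
    (lintegral_map hg (R.measurable_phi_x t x)).symm
  have hPt_meas : Measurable fun x => ∫⁻ ω, R.g (R.φ t ω x) ∂ R.P := by
    simpa only [funext h1] using R.measurable_lint_law t hg
  have hle_ptw : ∀ x, (∫⁻ ω, R.g (R.φ t ω x) ∂ R.P) ≤ R.g x := by
    intro x
    rw [← R.key_fubini_univ t x]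
    exact measure_mono (fun ω h => R.stablePair_shift h)
  have hint_eq : ∫⁻ x, (∫⁻ ω, R.g (R.φ t ω x) ∂ R.P) ∂ρ = ∫⁻ x, R.g x ∂ρ := by
    simp_rw [h1]
    exact R.stationary_lintegral hρ t hg
  have hfin : ∫⁻ x, R.g x ∂ρ ≠ ∞ := by
    have hb : ∫⁻ x, R.g x ∂ρ ≤ 1 := by
      calc ∫⁻ x, R.g x ∂ρ ≤ ∫⁻ _, 1 ∂ρ := lintegral_mono (g_le_one R)
        _ = 1 := by simp
    exact (lt_of_le_of_lt hb ENNReal.one_lt_top).ne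
  have hae : (fun x => ∫⁻ ω, R.g (R.φ t ω x) ∂ R.P) =ᵐ[ρ] fun x => R.g x := by
    have hfin2 : ∫⁻ x, (∫⁻ ω, R.g (R.φ t ω x) ∂ R.P) ∂ρ ≠ ∞ := by
      rw [hint_eq]; exact hfin
    have hsub0 : ∫⁻ x, (R.g x - ∫⁻ ω, R.g (R.φ t ω x) ∂ R.P) ∂ρ = 0 := by
      rw [lintegral_sub hPt_meas hfin2 (ae_of_all _ hle_ptw), hint_eq, tsub_self]
    have h0 := (lintegral_eq_zero_iff (hg.sub hPt_meas)).1 hsub0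
    filter_upwards [h0] with x hx
    have hx' : R.g x - (∫⁻ ω, R.g (R.φ t ω x) ∂ R.P) = 0 := hx
    exact le_antisymm (hle_ptw x) (tsub_eq_zero_iff_le.1 hx')
  filter_upwards [hae] with x hx
  have hAt := R.measurableSet_At t x
  have hsub : {ω | R.stablePair (R.θ t ω) (R.φ t ω x)} ⊆ {ω | R.stablePair ω x} :=
    fun ω h => R.stablePair_shift h
  rw [measure_diff hsub hAt.nullMeasurableSet (measure_ne_top _ _), R.key_fubini_univ t x, hx]
  exact tsub_self _

lemma levy (R : MRDS Ω X) (x : X)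
    (hx : ∀ t, R.P ({ω | R.stablePair ω x}
      \ {ω | R.stablePair (R.θ t ω) (R.φ t ω x)}) = 0) :
    ∀ᵐ ω ∂ R.P, Tendsto (fun t => (R.g (R.φ t ω x)).toReal) atTop
      (𝓝 (Set.indicator {ω' | R.stablePair ω' x} (fun _ => (1:ℝ)) ω)) := by
  haveI := R.hprob
  set A := {ω' | R.stablePair ω' x} with hA
  have hAmm : MeasurableSet[MM R] A := R.measurableSet_sec x
  have hAmeas : MeasurableSet A := hMM R _ hAmm
  set ℱ : Filtration ℕ mΩi := ⟨R.F, R.hmono, R.hle⟩ with hℱ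
  have hint : Integrable (A.indicator (fun _ => (1:ℝ))) R.P :=
    (integrable_const (1:ℝ)).indicator hAmeas
  have hsm : StronglyMeasurable[⨆ n, ℱ n] (A.indicator fun _ => (1:ℝ)) :=
    stronglyMeasurable_const.indicator hAmm
  have hlevy := hint.tendsto_ae_condExp hsm
  have hce : ∀ t : ℕ, (R.P[A.indicator (fun _ => (1:ℝ)) | ℱ t])
      =ᵐ[R.P] fun ω => (R.g (R.φ t ω x)).toReal := by
    intro t
    set At := {ω | R.stablePair (R.θ t ω) (R.φ t ω x)} with hAt
    have hAtm : MeasurableSet At := R.measurableSet_At t x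
    have hsubt : At ⊆ A := fun ω h => R.stablePair_shift h
    have haeset : A =ᵐ[R.P] At := by
      rw [ae_eq_set]
      refine ⟨hx t, ?_⟩
      rw [Set.diff_eq_empty.2 hsubt]
      simp
    have hind : A.indicator (fun _ => (1:ℝ)) =ᵐ[R.P] At.indicator (fun _ => (1:ℝ)) :=
      indicator_ae_eq_of_ae_eq_set haeset
    set G : Ω → ℝ := fun ω => (R.g (R.φ t ω x)).toReal with hG
    have hGsm : StronglyMeasurable[R.F t] G :=
      (((measurable_g R).comp (R.measurable_phi_pt t x)).ennreal_toReal).stronglyMeasurable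
    have hGb : ∀ ω, ‖G ω‖ ≤ 1 := by
      intro ω
      rw [Real.norm_eq_abs, abs_of_nonneg ENNReal.toReal_nonneg]
      have := ENNReal.toReal_mono ENNReal.one_ne_top (g_le_one R (R.φ t ω x))
      simpa using this
    have hGint : Integrable G R.P :=
      Integrable.mono' (integrable_const (1:ℝ))
        ((hGsm.mono (R.hle t)).aestronglyMeasurable) (ae_of_all _ hGb)
    have h2 : (R.P[At.indicator (fun _ => (1:ℝ)) | ℱ t]) =ᵐ[R.P] G := by
      haveI : IsFiniteMeasure (R.P.trim (R.hle t)) := isFiniteMeasure_trim (R.hle t)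
      refine (ae_eq_condExp_of_forall_setIntegral_eq (R.hle t)
        ((integrable_const (1:ℝ)).indicator hAtm) (fun s _ _ => hGint.integrableOn)
        ?_ hGsm.aestronglyMeasurable).symm
      intro s hs hμs
      have hsmeas : MeasurableSet s := R.hle t _ hs
      have hRHS : ∫ ω in s, At.indicator (fun _ => (1:ℝ)) ω ∂ R.P
          = (R.P (s ∩ At)).toReal := by
        rw [setIntegral_indicator hAtm]
        rw [setIntegral_const]
        simp [measureReal_def]
      have hLHS : ∫ ω in s, G ω ∂ R.P = (R.P (s ∩ At)).toReal := by
        have hfa : AEMeasurable (fun ω => R.g (R.φ t ω x)) (R.P.restrict s) :=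
          ((measurable_g R).comp (R.measurable_phi_x t x)).aemeasurable
        have hflt : ∀ᵐ ω ∂(R.P.restrict s), R.g (R.φ t ω x) < ∞ :=
          ae_of_all _ fun ω => lt_of_le_of_lt (g_le_one R _) ENNReal.one_lt_top
        rw [hG]
        rw [integral_toReal hfa hflt]
        congr 1
        rw [← R.key_fubini t x hs]
      rw [hLHS, hRHS]
    exact (condExp_congr_ae hind).trans h2
  have hall : ∀ᵐ ω ∂ R.P, ∀ t : ℕ, (R.P[A.indicator (fun _ => (1:ℝ)) | ℱ t]) ω
      = (R.g (R.φ t ω x)).toReal := ae_all_iff.2 fun t => hce t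
  filter_upwards [hlevy, hall] with ω h1 h2
  have hfe : (fun t => (R.g (R.φ t ω x)).toReal)
      = fun t => (R.P[A.indicator (fun _ => (1:ℝ)) | ℱ t]) ω := funext fun t => (h2 t).symm
  rw [hfe]
  exact h1

lemma part3 (R : MRDS Ω X) {ρ : Measure X} (hρp : IsProbabilityMeasure ρ)
    (hρ : R.stationary ρ) :
    ρ ({x | R.potStable x} \ {x | R.asStable x}) = 0 := by
  haveI := R.hprob; haveI := hρp
  set u : X → ℝ≥0∞ := fun z => R.g z * (1 - R.g z) with hu
  have hum : Measurable u := (measurable_g R).mul (measurable_const.sub (measurable_g R))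
  have hub : ∀ z, u z ≤ 1 := by
    intro z
    calc u z ≤ 1 * 1 := mul_le_mul' (g_le_one R z) tsub_le_self
      _ = 1 := one_mul 1
  have hkey : ∫⁻ z, u z ∂ρ = 0 := by
    have hconv : ∀ᵐ x ∂ρ, Tendsto (fun t => ∫⁻ ω, u (R.φ t ω x) ∂ R.P) atTop (𝓝 0) := by
      filter_upwards [R.ae_harmonic hρp hρ] with x hx
      have hptw : ∀ᵐ ω ∂ R.P, Tendsto (fun t => u (R.φ t ω x)) atTop (𝓝 0) := by
        filter_upwards [R.levy x hx] with ω hω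
        set b : ℝ := Set.indicator {ω' | R.stablePair ω' x} (fun _ => (1:ℝ)) ω with hb
        have heq : (fun t => u (R.φ t ω x)) = fun t =>
            ENNReal.ofReal ((R.g (R.φ t ω x)).toReal * (1 - (R.g (R.φ t ω x)).toReal)) := by
          funext t
          set c := R.g (R.φ t ω x) with hc
          have hc1 : c ≤ 1 := g_le_one R _
          have hcne : c ≠ ∞ := (lt_of_le_of_lt hc1 ENNReal.one_lt_top).ne
          have hsne : (1 : ℝ≥0∞) - c ≠ ∞ :=
            (lt_of_le_of_lt tsub_le_self ENNReal.one_lt_top).ne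
          have hune : c * (1 - c) ≠ ∞ := ENNReal.mul_ne_top hcne hsne
          rw [show u (R.φ t ω x) = c * (1 - c) from rfl,
            ← ENNReal.ofReal_toReal hune, ENNReal.toReal_mul,
            ENNReal.toReal_sub_of_le hc1 ENNReal.one_ne_top, ENNReal.toReal_one]
        rw [heq]
        have hlim : Tendsto (fun t => (R.g (R.φ t ω x)).toReal
            * (1 - (R.g (R.φ t ω x)).toReal)) atTop (𝓝 (b * (1 - b))) :=
          hω.mul (tendsto_const_nhds.sub hω)
        have hb0 : b * (1 - b) = 0 := by
          by_cases hmem : ω ∈ {ω' | R.stablePair ω' x} <;> simp [hb, hmem]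
        have hcomp := (ENNReal.continuous_ofReal.tendsto _).comp hlim
        rw [hb0] at hcomp
        rwa [ENNReal.ofReal_zero] at hcomp
      have hmeas_t : ∀ t : ℕ, Measurable fun ω => u (R.φ t ω x) := fun t =>
        hum.comp (R.measurable_phi_x t x)
      have hdc := tendsto_lintegral_of_dominated_convergence (μ := R.P)
        (fun _ => (1:ℝ≥0∞)) hmeas_t (fun t => ae_of_all _ fun ω => hub _) (by simp) hptw
      simpa using hdc
    have hconst : ∀ t : ℕ, ∫⁻ x, (∫⁻ ω, u (R.φ t ω x) ∂ R.P) ∂ρ = ∫⁻ z, u z ∂ρ := by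
      intro t
      have h1 : ∀ x, ∫⁻ ω, u (R.φ t ω x) ∂ R.P = ∫⁻ z, u z ∂(R.law x t) := fun x =>
        (lintegral_map hum (R.measurable_phi_x t x)).symm
      simp_rw [h1]
      exact R.stationary_lintegral hρ t hum
    have hmeasx : ∀ t : ℕ, Measurable fun x => ∫⁻ ω, u (R.φ t ω x) ∂ R.P := by
      intro t
      have h1 : ∀ x, ∫⁻ ω, u (R.φ t ω x) ∂ R.P = ∫⁻ z, u z ∂(R.law x t) := fun x =>
        (lintegral_map hum (R.measurable_phi_x t x)).symm
      simpa only [funext h1] using R.measurable_lint_law t hum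
    have hboundx : ∀ t : ℕ, ∀ᵐ x ∂ρ, (∫⁻ ω, u (R.φ t ω x) ∂ R.P) ≤ 1 := by
      intro t; refine ae_of_all _ fun x => ?_
      calc ∫⁻ ω, u (R.φ t ω x) ∂ R.P ≤ ∫⁻ _, 1 ∂ R.P := lintegral_mono fun ω => hub _
        _ = 1 := by simp
    have hlim2 := tendsto_lintegral_of_dominated_convergence (μ := ρ)
      (fun _ => (1:ℝ≥0∞)) hmeasx hboundx (by simp) hconv
    rw [show (fun t : ℕ => ∫⁻ x, (∫⁻ ω, u (R.φ t ω x) ∂ R.P) ∂ρ)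
      = fun _ : ℕ => ∫⁻ z, u z ∂ρ from funext hconst] at hlim2
    have h0' : Tendsto (fun _ : ℕ => ∫⁻ z, u z ∂ρ) atTop (𝓝 0) := by
      simpa using hlim2
    exact tendsto_nhds_unique tendsto_const_nhds h0'
  have hae0 : ∀ᵐ z ∂ρ, u z = 0 := by
    have h := (lintegral_eq_zero_iff hum).1 hkey
    filter_upwards [h] with z hz
    simpa using hz
  have hsub : {x | R.potStable x} \ {x | R.asStable x} ⊆ {z | ¬ (u z = 0)} := by
    rintro z ⟨hpot, hnas⟩
    simp only [Set.mem_setOf_eq] at hpot hnas ⊢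
    intro h0
    rcases mul_eq_zero.1 h0 with h | h
    · exact absurd h hpot.ne'
    · have h1le : (1:ℝ≥0∞) ≤ R.g z := tsub_eq_zero_iff_le.1 h
      exact hnas (le_antisymm (g_le_one R z) h1le)
  exact measure_mono_null hsub (ae_iff.1 hae0)

end MRDS

/-- The set of potentially stable points is open and backward-invariant (its complement is
forward-invariant for the transition probabilities), and for any stationary probability
measure `ρ`, `ρ`-almost every potentially stable point is almost surely stable. -/
theorem stmt9 {Ω X : Type*} [MeasurableSpace Ω] [MetricSpace X] [CompactSpace X]
    [MeasurableSpace X] [BorelSpace X] (R : MRDS Ω X) :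
    IsOpen {x : X | R.potStable x} ∧
    (∀ y ∈ {x : X | R.potStable x}ᶜ, ∀ t, R.law y t {x : X | R.potStable x}ᶜ = 1) ∧
    ∀ ρ : Measure X, IsProbabilityMeasure ρ → R.stationary ρ →
      ρ ({x : X | R.potStable x} \ {x : X | R.asStable x}) = 0 := by
  rcases isEmpty_or_nonempty X with hX | hX
  · refine ⟨?_, ?_, ?_⟩
    · have h : {x : X | R.potStable x} = ∅ := Set.eq_empty_of_isEmpty _
      rw [h]; exact isOpen_empty
    · intro y _ _
      exact (IsEmpty.false y).elim
    · intro ρ hρp _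
      have h1 : (Set.univ : Set X) = ∅ := Set.univ_eq_empty_iff.2 hX
      have h2 := hρp.measure_univ
      rw [h1] at h2
      simp at h2
  · exact ⟨R.isOpen_potStable, fun y hy t => R.law_compl_potStable_eq_one hy t,
      fun ρ hρp hρ => R.part3 hρp hρ⟩
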